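/- arXiv:1203.5186 — 2 statements merged into one kernel-verified Lean document; each statement's English description precedes it below -/
import Mathlib

section
/- Let G be an acyclically edge k-critical graph and uv an edge of G. For any acyclic edge k-coloring φ of G − uv: if C_φ(u) ∩ C_φ(v) = ∅ then d(u) + d(v) ≥ k + 2; and if |C_φ(u) ∩ C_φ(v)| = t, with φ(uu_i) = φ(vv_i) for i = 1,...,t, then Σ_{i=1}^t d(v_i) + d(u) + d(v) ≥ k + t + 2 and Σ_{i=1}^t d(u_i) + d(u) + d(v) ≥ k + t + 2. -/
open SimpleGraph Finset

universe u

variable {V : Type u}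

/-- A proper edge coloring with `k` colors: distinct edges sharing a vertex get
different colors. -/
def ProperEC (G : SimpleGraph V) {k : ℕ} (φ : Sym2 V → Fin k) : Prop :=
  ∀ e₁ ∈ G.edgeSet, ∀ e₂ ∈ G.edgeSet, e₁ ≠ e₂ → (∃ x, x ∈ e₁ ∧ x ∈ e₂) → φ e₁ ≠ φ e₂

/-- An acyclic edge coloring: proper, and no cycle of `G` uses only two colors. -/
def AcyclicEC (G : SimpleGraph V) {k : ℕ} (φ : Sym2 V → Fin k) : Prop :=
  ProperEC G φ ∧
    ∀ (v : V) (w : G.Walk v v), w.IsCycle → 2 < (w.edges.map φ).toFinset.card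

/-- `G` has an acyclic edge coloring with `k` colors, i.e. `χ'_a(G) ≤ k`. -/
def HasAEC (G : SimpleGraph V) (k : ℕ) : Prop :=
  ∃ φ : Sym2 V → Fin k, AcyclicEC G φ

/-- `G` is acyclically edge `k`-critical: `χ'_a(G) > k` but every proper subgraph
admits an acyclic edge `k`-coloring. -/
def AcyclicallyEdgeCritical (G : SimpleGraph V) (k : ℕ) : Prop :=
  ¬ HasAEC G k ∧ ∀ H : SimpleGraph V, H ≤ G → H ≠ G → HasAEC H k

/-- `C_φ(v)`: the set of colors appearing on edges incident with `v`. -/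
def Cset (G : SimpleGraph V) {k : ℕ} (φ : Sym2 V → Fin k) (v : V) : Set (Fin k) :=
  {c | ∃ u, G.Adj v u ∧ φ s(v, u) = c}

/-- In a path, at most one edge contains the start vertex. -/
lemma path_start_edge_unique {G : SimpleGraph V} {x y : V} {p : G.Walk x y}
    (hp : p.IsPath) {b c : V} (hb : s(x, b) ∈ p.edges) (hc : s(x, c) ∈ p.edges) :
    b = c := by
  cases p with
  | nil => simp at hb
  | cons h q =>
    rename_i z
    rw [SimpleGraph.Walk.cons_isPath_iff] at hp
    have key : ∀ d : V, s(x, d) ∈ (SimpleGraph.Walk.cons h q).edges → d = z := by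
      intro d hd
      rw [SimpleGraph.Walk.edges_cons, List.mem_cons] at hd
      rcases hd with hd | hd
      · rw [Sym2.eq_iff] at hd
        rcases hd with ⟨-, rfl⟩ | ⟨h1, -⟩
        · rfl
        · exact (G.irrefl (h1 ▸ h)).elim
      · exact absurd (q.fst_mem_support_of_mem_edges hd) hp.2
    rw [key b hb, key c hc]

/-- In a cycle, if `s(a,b)` is an edge then there is a second edge at `a`. -/
lemma cycle_second_edge {G : SimpleGraph V} [DecidableEq V] {r : V} {w : G.Walk r r}
    (hw : w.IsCycle) {a b : V} (hab : s(a, b) ∈ w.edges) :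
    ∃ x, x ≠ b ∧ s(a, x) ∈ w.edges := by
  have ha : a ∈ w.support := w.fst_mem_support_of_mem_edges hab
  set w' := w.rotate a ha with hw'
  have hcyc : w'.IsCycle := hw.rotate ha
  have hrot := SimpleGraph.Walk.rotate_edges w a ha
  have hmem : ∀ e : Sym2 V, e ∈ w'.edges ↔ e ∈ w.edges := fun e => hrot.mem_iff
  suffices h : ∃ x, x ≠ b ∧ s(a, x) ∈ w'.edges by
    obtain ⟨x, hx1, hx2⟩ := h
    exact ⟨x, hx1, (hmem _).mp hx2⟩
  have hab' : s(a, b) ∈ w'.edges := (hmem _).mpr hab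
  clear_value w'
  clear hmem hrot hab hw hw' ha
  cases w' with
  | nil => simp at hab'
  | cons h q =>
    rename_i z
    have hq : q.IsPath ∧ s(a, z) ∉ q.edges :=
      (SimpleGraph.Walk.cons_isCycle_iff q h).mp hcyc
    -- q : Walk z a, get last edge via q.reverse
    have hqlen : 2 ≤ q.length := by
      have := hcyc.three_le_length
      simp only [SimpleGraph.Walk.length_cons] at this
      omega
    have hqr : ¬ q.reverse.Nil := by
      rw [SimpleGraph.Walk.nil_iff_length_eq, SimpleGraph.Walk.length_reverse]
      omega
    rw [SimpleGraph.Walk.not_nil_iff] at hqr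
    obtain ⟨d, hd, q', hq'⟩ := hqr
    have hdq : s(a, d) ∈ q.edges := by
      rw [← List.mem_reverse, ← SimpleGraph.Walk.edges_reverse, hq',
        SimpleGraph.Walk.edges_cons]
      exact List.mem_cons_self
    have hdz : d ≠ z := fun hdz => hq.2 (hdz ▸ hdq)
    rw [SimpleGraph.Walk.edges_cons, List.mem_cons] at hab'
    rcases hab' with hab' | hab'
    · -- s(a,b) = s(a,z), so b = z, take d
      have hbz : b = z := by
        rw [Sym2.eq_iff] at hab'
        rcases hab' with ⟨-, rfl⟩ | ⟨rfl, rfl⟩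
        · rfl
        · exact (G.irrefl h).elim
      refine ⟨d, by rw [hbz]; exact hdz, ?_⟩
      rw [SimpleGraph.Walk.edges_cons]
      exact List.mem_cons_of_mem _ hdq
    · -- s(a,b) ∈ q.edges; then b = d by path uniqueness at start of q.reverse
      have hbq : s(a, b) ∈ q.reverse.edges := by
        rw [SimpleGraph.Walk.edges_reverse, List.mem_reverse]; exact hab'
      have hdqr : s(a, d) ∈ q.reverse.edges := by
        rw [SimpleGraph.Walk.edges_reverse, List.mem_reverse]; exact hdq
      have hbd : b = d := path_start_edge_unique hq.1.reverse hbq hdqr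
      refine ⟨z, fun hzb => ?_, List.mem_cons_self⟩
      exact hq.2 (by rwa [← hzb] at hab')
    

lemma two_elems {α : Type*} [DecidableEq α] {s : Finset α} (hs : s.card ≤ 2) {a b c : α}
    (ha : a ∈ s) (hb : b ∈ s) (hc : c ∈ s) (hba : b ≠ a) (hca : c ≠ a) : c = b := by
  by_contra hcb
  have hsub : ({a, b, c} : Finset α) ⊆ s := by
    intro z hz
    simp only [Finset.mem_insert, Finset.mem_singleton] at hz
    rcases hz with rfl | rfl | rfl <;> assumption
  have h3 : ({a, b, c} : Finset α).card = 3 := by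
    rw [Finset.card_insert_of_notMem (by simp [Ne.symm hba, Ne.symm hca]),
      Finset.card_insert_of_notMem (by rw [Finset.mem_singleton]; exact fun h => hcb h.symm),
      Finset.card_singleton]
  have := Finset.card_le_card hsub
  omega

lemma extend_lemma {V : Type u} [Fintype V] [DecidableEq V] (G : SimpleGraph V) {k : ℕ}
    (hG : ¬ HasAEC G k) {u v : V} (huv : G.Adj u v)
    (φ : Sym2 V → Fin k)
    (hφ : AcyclicEC (G.deleteEdges {s(u, v)}) φ)
    {c : Fin k}
    (hcu : c ∉ Cset (G.deleteEdges {s(u, v)}) φ u)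
    (hcv : c ∉ Cset (G.deleteEdges {s(u, v)}) φ v) :
    ∃ c' x y, c' ≠ c ∧
      (G.deleteEdges {s(u, v)}).Adj u x ∧ φ s(u, x) = c' ∧
        c ∈ Cset (G.deleteEdges {s(u, v)}) φ x ∧
      (G.deleteEdges {s(u, v)}).Adj v y ∧ φ s(v, y) = c' ∧
        c ∈ Cset (G.deleteEdges {s(u, v)}) φ y := by
  set G' := G.deleteEdges {s(u, v)} with hG'
  have hmemG' : ∀ e, e ∈ G.edgeSet → e ≠ s(u, v) → e ∈ G'.edgeSet := by
    intro e he hne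
    rw [hG', edgeSet_deleteEdges]
    exact ⟨he, by simpa using hne⟩
  set φ' : Sym2 V → Fin k := fun e => if e = s(u, v) then c else φ e with hφ'
  have hφ'uv : φ' s(u, v) = c := if_pos rfl
  have hφ'ne : ∀ e, e ≠ s(u, v) → φ' e = φ e := fun e he => if_neg he
  -- properness of the extension
  have hprop : ProperEC G φ' := by
    intro e₁ he₁ e₂ he₂ hne hsh
    obtain ⟨x, hx1, hx2⟩ := hsh
    have key : ∀ e, e ∈ G.edgeSet → e ≠ s(u, v) → ∀ z, z ∈ e → z ∈ s(u, v) → φ e ≠ c := by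
      intro e he hnuv z hz hzuv heq
      obtain ⟨y, rfl⟩ := Sym2.mem_iff_exists.mp hz
      have hadj : G'.Adj z y := (SimpleGraph.mem_edgeSet G').mp (hmemG' _ he hnuv)
      rcases Sym2.mem_iff.mp hzuv with rfl | rfl
      · exact hcu ⟨y, hadj, heq⟩
      · exact hcv ⟨y, hadj, heq⟩
    by_cases h1 : e₁ = s(u, v) <;> by_cases h2 : e₂ = s(u, v)
    · exact (hne (h1.trans h2.symm)).elim
    · rw [h1] at hx1
      rw [hφ'ne e₂ h2, h1, hφ'uv]
      exact fun heq => key e₂ he₂ h2 x hx2 hx1 heq.symm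
    · rw [h2] at hx2
      rw [hφ'ne e₁ h1, h2, hφ'uv]
      exact key e₁ he₁ h1 x hx1 hx2
    · rw [hφ'ne e₁ h1, hφ'ne e₂ h2]
      exact hφ.1 e₁ (hmemG' _ he₁ h1) e₂ (hmemG' _ he₂ h2) hne ⟨x, hx1, hx2⟩
  -- there must be a bichromatic cycle
  have hcyc : ∃ (r : V) (w : G.Walk r r), w.IsCycle ∧ (w.edges.map φ').toFinset.card ≤ 2 := by
    by_contra hno
    push_neg at hno
    exact hG ⟨φ', hprop, fun r w hw => hno r w hw⟩
  obtain ⟨r, w, hw, hcard⟩ := hcyc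
  -- the cycle must use the edge uv
  have huvmem : s(u, v) ∈ w.edges := by
    by_contra hmem
    have hsub : ∀ e ∈ w.edges, e ∈ G'.edgeSet := fun e he =>
      hmemG' e (w.edges_subset_edgeSet he) (fun h => hmem (h ▸ he))
    have h2 := hφ.2 r (w.transfer G' hsub) (hw.transfer hsub)
    rw [SimpleGraph.Walk.edges_transfer] at h2
    have hmapeq : w.edges.map φ = w.edges.map φ' :=
      List.map_congr_left (fun e he => (hφ'ne e (fun h => hmem (h ▸ he))).symm)
    rw [hmapeq] at h2
    omega
  have hcmem : c ∈ (w.edges.map φ').toFinset := by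
    rw [List.mem_toFinset]
    exact hφ'uv ▸ List.mem_map_of_mem (f := φ') huvmem
  -- second edge at u
  obtain ⟨x, hxv, hxe⟩ := cycle_second_edge hw huvmem
  have hxne : s(u, x) ≠ s(u, v) := fun h => hxv (Sym2.congr_right.mp h)
  have hadjux : G'.Adj u x :=
    (SimpleGraph.mem_edgeSet G').mp (hmemG' _ (w.edges_subset_edgeSet hxe) hxne)
  have hc'mem : φ s(u, x) ∈ (w.edges.map φ').toFinset := by
    rw [List.mem_toFinset]
    exact hφ'ne _ hxne ▸ List.mem_map_of_mem (f := φ') hxe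
  have hc'c : φ s(u, x) ≠ c := fun h => hcu ⟨x, hadjux, h⟩
  -- second edge at v
  have huvmem' : s(v, u) ∈ w.edges := Sym2.eq_swap ▸ huvmem
  obtain ⟨y, hyu, hye⟩ := cycle_second_edge hw huvmem'
  have hyne : s(v, y) ≠ s(u, v) := fun h => hyu (Sym2.congr_right.mp (h.trans Sym2.eq_swap))
  have hadjvy : G'.Adj v y :=
    (SimpleGraph.mem_edgeSet G').mp (hmemG' _ (w.edges_subset_edgeSet hye) hyne)
  have hdmem : φ s(v, y) ∈ (w.edges.map φ').toFinset := by
    rw [List.mem_toFinset]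
    exact hφ'ne _ hyne ▸ List.mem_map_of_mem (f := φ') hye
  have hdc : φ s(v, y) ≠ c := fun h => hcv ⟨y, hadjvy, h⟩
  -- the two colors coincide
  have hdc' : φ s(v, y) = φ s(u, x) := two_elems hcard hcmem hc'mem hdmem hc'c hdc
  -- second edge at x gives c ∈ C(x)
  have hcx : c ∈ Cset G' φ x := by
    have hxe' : s(x, u) ∈ w.edges := Sym2.eq_swap ▸ hxe
    obtain ⟨z, hzu, hze⟩ := cycle_second_edge hw hxe'
    have hxu : x ≠ u := hadjux.ne'
    have hzne : s(x, z) ≠ s(u, v) := by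
      intro h
      rcases Sym2.eq_iff.mp h with ⟨rfl, rfl⟩ | ⟨rfl, rfl⟩
      · exact hxu rfl
      · exact hzu rfl
    have hadjxz : G'.Adj x z :=
      (SimpleGraph.mem_edgeSet G').mp (hmemG' _ (w.edges_subset_edgeSet hze) hzne)
    have hzmem : φ s(x, z) ∈ (w.edges.map φ').toFinset := by
      rw [List.mem_toFinset]
      exact hφ'ne _ hzne ▸ List.mem_map_of_mem (f := φ') hze
    have hznec' : φ s(x, z) ≠ φ s(u, x) := by
      have hxu' : s(x, u) ∈ G'.edgeSet := hmemG' _ (w.edges_subset_edgeSet hxe')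
        (fun h => hxne (Sym2.eq_swap.trans h))
      have hneq : s(x, z) ≠ s(x, u) := fun h => hzu (Sym2.congr_right.mp h)
      have := hφ.1 _ (hadjxz) _ hxu' hneq ⟨x, by simp, by simp⟩
      rwa [show s(x, u) = s(u, x) from Sym2.eq_swap] at this
    have : φ s(x, z) = c := two_elems hcard hc'mem hcmem hzmem hc'c.symm hznec'
    exact ⟨z, hadjxz, this⟩
  -- second edge at y gives c ∈ C(y)
  have hcy : c ∈ Cset G' φ y := by
    have hye' : s(y, v) ∈ w.edges := Sym2.eq_swap ▸ hye
    obtain ⟨z, hzv, hze⟩ := cycle_second_edge hw hye'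
    have hyv : y ≠ v := hadjvy.ne'
    have hzne : s(y, z) ≠ s(u, v) := by
      intro h
      rcases Sym2.eq_iff.mp h with ⟨rfl, rfl⟩ | ⟨rfl, rfl⟩
      · exact hzv rfl
      · exact hyv rfl
    have hadjyz : G'.Adj y z :=
      (SimpleGraph.mem_edgeSet G').mp (hmemG' _ (w.edges_subset_edgeSet hze) hzne)
    have hzmem : φ s(y, z) ∈ (w.edges.map φ').toFinset := by
      rw [List.mem_toFinset]
      exact hφ'ne _ hzne ▸ List.mem_map_of_mem (f := φ') hze
    have hznec' : φ s(y, z) ≠ φ s(u, x) := by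
      have hyv' : s(y, v) ∈ G'.edgeSet := hmemG' _ (w.edges_subset_edgeSet hye')
        (fun h => hyne (Sym2.eq_swap.trans h))
      have hneq : s(y, z) ≠ s(y, v) := fun h => hzv (Sym2.congr_right.mp h)
      have := hφ.1 _ (hadjyz) _ hyv' hneq ⟨y, by simp, by simp⟩
      rw [show s(y, v) = s(v, y) from Sym2.eq_swap] at this
      exact fun h => this (h.trans hdc'.symm)
    have : φ s(y, z) = c := two_elems hcard hc'mem hcmem hzmem hc'c.symm hznec'
    exact ⟨z, hadjyz, this⟩
  exact ⟨φ s(u, x), x, y, hc'c, hadjux, rfl, hcx, hadjvy, hdc', hcy⟩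

/-- Finset version of `Cset`. -/
noncomputable def CF {V : Type u} [Fintype V] {k : ℕ} (G' : SimpleGraph V)
    (φ : Sym2 V → Fin k) (x : V) : Finset (Fin k) :=
  @Finset.filter _ (fun c => c ∈ Cset G' φ x) (Classical.decPred _) Finset.univ

lemma mem_CF {V : Type u} [Fintype V] {k : ℕ} {G' : SimpleGraph V}
    {φ : Sym2 V → Fin k} {x : V} {c : Fin k} : c ∈ CF G' φ x ↔ c ∈ Cset G' φ x := by
  simp [CF]

lemma CF_card_le {V : Type u} [Fintype V] [DecidableEq V] {G G' : SimpleGraph V}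
    [DecidableRel G.Adj] (hle : G' ≤ G) {k : ℕ} (φ : Sym2 V → Fin k) (x b : V)
    (hb : ¬ G'.Adj x b) (hbG : G.Adj x b) :
    (CF G' φ x).card + 1 ≤ G.degree x := by
  classical
  have hsub : CF G' φ x ⊆ ((G.neighborFinset x).erase b).image (fun y => φ s(x, y)) := by
    intro c hc
    obtain ⟨y, hy, rfl⟩ := mem_CF.mp hc
    refine Finset.mem_image.mpr ⟨y, Finset.mem_erase.mpr ⟨fun h => hb (h ▸ hy), ?_⟩, rfl⟩
    exact (G.mem_neighborFinset x y).mpr (hle hy)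
  have h1 := Finset.card_le_card hsub
  have h2 := Finset.card_image_le (s := (G.neighborFinset x).erase b)
    (f := fun y => φ s(x, y))
  have h3 : ((G.neighborFinset x).erase b).card = G.degree x - 1 := by
    rw [Finset.card_erase_of_mem ((G.mem_neighborFinset x b).mpr hbG)]
    rfl
  have h4 : 1 ≤ G.degree x := by
    rw [← G.card_neighborFinset_eq_degree]
    exact Finset.card_pos.mpr ⟨b, (G.mem_neighborFinset x b).mpr hbG⟩
  omega

lemma side_count {V : Type u} [Fintype V] [DecidableEq V] {G G' : SimpleGraph V}
    [DecidableRel G.Adj] (hle : G' ≤ G) {k t : ℕ} (φ : Sym2 V → Fin k) (b : V)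
    (w : Fin t → V) (hadj : ∀ i, G'.Adj b (w i)) (B : Finset (Fin k))
    (hB : ∀ c ∈ B, ∃ i, c ∈ Cset G' φ (w i)) (hbB : ∀ c ∈ B, c ∉ Cset G' φ b) :
    B.card + t ≤ ∑ i, G.degree (w i) := by
  classical
  have hsub : B ⊆ Finset.univ.biUnion
      (fun i => B.filter (fun c => c ∈ Cset G' φ (w i))) := by
    intro c hc
    obtain ⟨i, hi⟩ := hB c hc
    exact Finset.mem_biUnion.mpr ⟨i, Finset.mem_univ i,
      Finset.mem_filter.mpr ⟨hc, hi⟩⟩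
  have h1 : B.card ≤ ∑ i, (B.filter (fun c => c ∈ Cset G' φ (w i))).card :=
    (Finset.card_le_card hsub).trans (Finset.card_biUnion_le)
  have h2 : ∀ i, (B.filter (fun c => c ∈ Cset G' φ (w i))).card + 1 ≤ G.degree (w i) := by
    intro i
    have hfsub : B.filter (fun c => c ∈ Cset G' φ (w i)) ⊆
        ((G.neighborFinset (w i)).erase b).image (fun y => φ s(w i, y)) := by
      intro c hc
      obtain ⟨hcB, y, hy, rfl⟩ := Finset.mem_filter.mp hc
      refine Finset.mem_image.mpr ⟨y, Finset.mem_erase.mpr ⟨?_, ?_⟩, rfl⟩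
      · rintro rfl
        exact hbB _ hcB ⟨w i, hadj i, Sym2.eq_swap ▸ rfl⟩
      · exact (G.mem_neighborFinset _ y).mpr (hle hy)
    have hc1 := Finset.card_le_card hfsub
    have hc2 := Finset.card_image_le (s := (G.neighborFinset (w i)).erase b)
      (f := fun y => φ s(w i, y))
    have hc3 : ((G.neighborFinset (w i)).erase b).card = G.degree (w i) - 1 := by
      rw [Finset.card_erase_of_mem ((G.mem_neighborFinset _ b).mpr (hle (hadj i)).symm)]
      rfl
    have hc4 : 1 ≤ G.degree (w i) := by
      rw [← G.card_neighborFinset_eq_degree]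
      exact Finset.card_pos.mpr ⟨b, (G.mem_neighborFinset _ b).mpr (hle (hadj i)).symm⟩
    omega
  have h3 : ∑ i, ((B.filter (fun c => c ∈ Cset G' φ (w i))).card + 1) ≤
      ∑ i, G.degree (w i) := Finset.sum_le_sum (fun i _ => h2 i)
  rw [Finset.sum_add_distrib, Finset.sum_const, Finset.card_univ, Fintype.card_fin,
    smul_eq_mul, mul_one] at h3
  omega

/-- Fact 2 on degree sums for critical graphs: for an edge `uv` of an acyclically
edge `k`-critical graph `G` and any acyclic edge `k`-coloring `φ` of `G - uv`:
if `C_φ(u) ∩ C_φ(v) = ∅` then `d(u) + d(v) ≥ k + 2`; and if the intersection has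
size `t`, realized by distinct neighbors `u_i` of `u` and `v_i` of `v` with
`φ(uu_i) = φ(vv_i)`, then `Σ d(v_i) + d(u) + d(v) ≥ k + t + 2` and
`Σ d(u_i) + d(u) + d(v) ≥ k + t + 2`. -/
theorem critical_degree_sum_fact
    {V : Type u} [Fintype V] [DecidableEq V] (G : SimpleGraph V)
    [DecidableRel G.Adj] (k : ℕ)
    (hG : AcyclicallyEdgeCritical G k) {u v : V} (huv : G.Adj u v)
    (φ : Sym2 V → Fin k)
    (hφ : AcyclicEC (G.deleteEdges {s(u, v)}) φ) :
    (Cset (G.deleteEdges {s(u, v)}) φ u ∩ Cset (G.deleteEdges {s(u, v)}) φ v = ∅ →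
      k + 2 ≤ G.degree u + G.degree v) ∧
    ∀ (t : ℕ) (ui vi : Fin t → V),
      Function.Injective ui → Function.Injective vi →
      (∀ i, (G.deleteEdges {s(u, v)}).Adj u (ui i)) →
      (∀ i, (G.deleteEdges {s(u, v)}).Adj v (vi i)) →
      (∀ i, φ s(u, ui i) = φ s(v, vi i)) →
      (Cset (G.deleteEdges {s(u, v)}) φ u ∩ Cset (G.deleteEdges {s(u, v)}) φ v).ncard = t →
      k + t + 2 ≤ (∑ i, G.degree (vi i)) + G.degree u + G.degree v ∧
      k + t + 2 ≤ (∑ i, G.degree (ui i)) + G.degree u + G.degree v := by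
  classical
  set G' := G.deleteEdges {s(u, v)} with hG'def
  have hle : G' ≤ G := by
    rw [hG'def]
    exact SimpleGraph.deleteEdges_le _
  have hnadj : ¬ G'.Adj u v := by
    rw [hG'def]
    simp
  have hnadj' : ¬ G'.Adj v u := fun h => hnadj h.symm
  have hCFu : (CF G' φ u).card + 1 ≤ G.degree u := CF_card_le hle φ u v hnadj huv
  have hCFv : (CF G' φ v).card + 1 ≤ G.degree v := CF_card_le hle φ v u hnadj' huv.symm
  constructor
  · -- part 1
    intro hinter
    have hall : ∀ c : Fin k, c ∈ CF G' φ u ∪ CF G' φ v := by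
      intro c
      by_contra hc
      rw [Finset.mem_union, not_or, mem_CF, mem_CF] at hc
      obtain ⟨c', x, y, -, hadjux, hφux, -, hadjvy, hφvy, -⟩ :=
        extend_lemma G hG.1 huv φ hφ hc.1 hc.2
      have : c' ∈ Cset G' φ u ∩ Cset G' φ v :=
        ⟨⟨x, hadjux, hφux⟩, ⟨y, hadjvy, hφvy⟩⟩
      rw [hinter] at this
      exact this
    have hk : k ≤ (CF G' φ u ∪ CF G' φ v).card := by
      calc k = (Finset.univ : Finset (Fin k)).card := by
              rw [Finset.card_univ, Fintype.card_fin]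
        _ ≤ _ := Finset.card_le_card (fun c _ => hall c)
    have := Finset.card_union_le (CF G' φ u) (CF G' φ v)
    omega
  · -- part 2
    intro t ui vi hui hvi huia hvia hcol hncard
    -- the intersection as a finset
    have hinterF : (CF G' φ u ∩ CF G' φ v).card = t := by
      rw [← hncard, ← Set.ncard_coe_finset]
      congr 1
      ext c
      simp [mem_CF, Cset]
    -- the image of the common colors equals the intersection
    set S : Finset (Fin k) := Finset.univ.image (fun i : Fin t => φ s(v, vi i)) with hSdef
    have hinj : Function.Injective (fun i : Fin t => φ s(v, vi i)) := by
      intro i j hij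
      by_contra hne
      have hvij : vi i ≠ vi j := fun h => hne (hvi h)
      have hedge : s(v, vi i) ≠ s(v, vi j) := fun h => hvij (Sym2.congr_right.mp h)
      exact hφ.1 _ ((G'.mem_edgeSet).mpr (hvia i)) _ ((G'.mem_edgeSet).mpr (hvia j))
        hedge ⟨v, by simp, by simp⟩ hij
    have hScard : S.card = t := by
      rw [hSdef, Finset.card_image_of_injective _ hinj, Finset.card_univ, Fintype.card_fin]
    have hSsub : S ⊆ CF G' φ u ∩ CF G' φ v := by
      intro c hc
      obtain ⟨i, -, rfl⟩ := Finset.mem_image.mp hc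
      refine Finset.mem_inter.mpr ⟨mem_CF.mpr ⟨ui i, huia i, hcol i⟩,
        mem_CF.mpr ⟨vi i, hvia i, rfl⟩⟩
    have hSeq : S = CF G' φ u ∩ CF G' φ v :=
      Finset.eq_of_subset_of_card_le hSsub (by omega)
    -- colors outside C(u) ∪ C(v)
    set B : Finset (Fin k) := Finset.univ \ (CF G' φ u ∪ CF G' φ v) with hBdef
    have hBu : ∀ c ∈ B, c ∉ Cset G' φ u := by
      intro c hc
      rw [hBdef, Finset.mem_sdiff, Finset.mem_union, not_or, mem_CF, mem_CF] at hc
      exact hc.2.1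
    have hBv : ∀ c ∈ B, c ∉ Cset G' φ v := by
      intro c hc
      rw [hBdef, Finset.mem_sdiff, Finset.mem_union, not_or, mem_CF, mem_CF] at hc
      exact hc.2.2
    have key : ∀ c ∈ B, (∃ i, c ∈ Cset G' φ (vi i)) ∧ ∃ j, c ∈ Cset G' φ (ui j) := by
      intro c hc
      obtain ⟨c', x, y, -, hadjux, hφux, hcx, hadjvy, hφvy, hcy⟩ :=
        extend_lemma G hG.1 huv φ hφ (hBu c hc) (hBv c hc)
      have hc'S : c' ∈ S := by
        rw [hSeq]
        exact Finset.mem_inter.mpr ⟨mem_CF.mpr ⟨x, hadjux, hφux⟩,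
          mem_CF.mpr ⟨y, hadjvy, hφvy⟩⟩
      obtain ⟨i, -, hi⟩ := Finset.mem_image.mp hc'S
      constructor
      · -- y = vi i
        have hyvi : y = vi i := by
          by_contra hne
          have hedge : s(v, y) ≠ s(v, vi i) := fun h => hne (Sym2.congr_right.mp h)
          exact hφ.1 _ ((G'.mem_edgeSet).mpr hadjvy) _ ((G'.mem_edgeSet).mpr (hvia i))
            hedge ⟨v, by simp, by simp⟩ (hφvy.trans hi.symm)
        exact ⟨i, hyvi ▸ hcy⟩
      · -- x = ui i
        have hx : φ s(u, ui i) = c' := (hcol i).trans hi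
        have hxui : x = ui i := by
          by_contra hne
          have hedge : s(u, x) ≠ s(u, ui i) := fun h => hne (Sym2.congr_right.mp h)
          exact hφ.1 _ ((G'.mem_edgeSet).mpr hadjux) _ ((G'.mem_edgeSet).mpr (huia i))
            hedge ⟨u, by simp, by simp⟩ (hφux.trans hx.symm)
        exact ⟨i, hxui ▸ hcx⟩
    have hcount_v : B.card + t ≤ ∑ i, G.degree (vi i) :=
      side_count hle φ v vi hvia B (fun c hc => (key c hc).1) hBv
    have hcount_u : B.card + t ≤ ∑ i, G.degree (ui i) :=
      side_count hle φ u ui huia B (fun c hc => (key c hc).2) hBu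
    have hku : k ≤ (CF G' φ u ∪ CF G' φ v).card + B.card := by
      have hsub : (Finset.univ : Finset (Fin k)) ⊆ (CF G' φ u ∪ CF G' φ v) ∪ B := by
        intro c _
        rw [Finset.mem_union, hBdef, Finset.mem_sdiff]
        by_cases h : c ∈ CF G' φ u ∪ CF G' φ v
        · exact Or.inl h
        · exact Or.inr ⟨Finset.mem_univ c, h⟩
      calc k = (Finset.univ : Finset (Fin k)).card := by
              rw [Finset.card_univ, Fintype.card_fin]
        _ ≤ ((CF G' φ u ∪ CF G' φ v) ∪ B).card := Finset.card_le_card hsub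
        _ ≤ _ := Finset.card_union_le _ _
    have hU : (CF G' φ u ∪ CF G' φ v).card + t = (CF G' φ u).card + (CF G' φ v).card := by
      rw [← hinterF]
      exact Finset.card_union_add_card_inter _ _
    exact ⟨by omega, by omega⟩
end

section
/- Let G be an acyclically edge k-critical graph with k > Δ(G) and let v be a vertex of degree 2 in G. Then every neighbor of v has degree at least k − Δ(G) + 3. -/
open SimpleGraph Finset

universe u

variable {V : Type u}

lemma color_inj {k : ℕ} {H : SimpleGraph V} {φ : Sym2 V → Fin k} (hp : ProperEC H φ)
    {x y y' : V} (h1 : H.Adj x y) (h2 : H.Adj x y') (he : φ s(x,y) = φ s(x,y')) : y = y' := by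
  by_contra hne
  exact hp s(x,y) (H.mem_edgeSet.mpr h1) s(x,y') (H.mem_edgeSet.mpr h2)
    (fun h => hne (Sym2.congr_right.mp h)) ⟨x, by simp, by simp⟩ he

/-- colors at a vertex -/

def Cf {k : ℕ} [Fintype V] (H : SimpleGraph V) [DecidableRel H.Adj]
    (φ : Sym2 V → Fin k) (x : V) : Finset (Fin k) :=
  (H.neighborFinset x).image (fun y => φ s(x,y))

lemma mem_Cf {k : ℕ} [Fintype V] {H : SimpleGraph V} [DecidableRel H.Adj]
    {φ : Sym2 V → Fin k} {x : V} {γ : Fin k} :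
    γ ∈ Cf H φ x ↔ ∃ y, H.Adj x y ∧ φ s(x,y) = γ := by
  simp [Cf]

lemma Cf_card {k : ℕ} [Fintype V] {H : SimpleGraph V} [DecidableRel H.Adj]
    {φ : Sym2 V → Fin k} (hp : ProperEC H φ) (x : V) :
    (Cf H φ x).card = H.degree x := by
  rw [Cf, Finset.card_image_of_injOn, SimpleGraph.degree]
  intro y hy y' hy' he
  exact color_inj hp ((H.mem_neighborFinset x y).mp hy) ((H.mem_neighborFinset x y').mp hy') he

lemma cycle_split {Γ : SimpleGraph V} {x : V} (W : Γ.Walk x x) (hW : W.IsCycle) :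
    ∃ (y p : V) (R : Γ.Walk p y), y ≠ p ∧ Γ.Adj x y ∧ Γ.Adj x p ∧
      s(x,y) ∈ W.edges ∧ s(x,p) ∈ W.edges ∧ x ∉ R.support ∧
      (∀ e ∈ R.edges, e ∈ W.edges) := by
  have h3 := hW.three_le_length
  cases W with
  | nil => exact absurd rfl hW.isCircuit.ne_nil
  | @cons _ y₁ _ h W' =>
    cases hR : W'.reverse with
    | nil =>
      exfalso
      have hlen : W'.length = 0 := by
        have := congrArg SimpleGraph.Walk.length hR
        simpa [SimpleGraph.Walk.length_reverse] using this
      simp only [SimpleGraph.Walk.length_cons] at h3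
      omega
    | @cons _ p _ h₂ R =>
      have hmem : s(x,p) ∈ W'.edges := by
        have : s(x,p) ∈ W'.reverse.edges := by rw [hR]; simp
        rwa [SimpleGraph.Walk.edges_reverse, List.mem_reverse] at this
      refine ⟨y₁, p, R, ?_, h, h₂, by simp, by simp [hmem], ?_, ?_⟩
      · intro hyp
        have hnd := hW.isCircuit.isTrail.edges_nodup
        rw [SimpleGraph.Walk.edges_cons, List.nodup_cons] at hnd
        rw [← hyp] at hmem
        exact hnd.1 hmem
      · -- x ∉ R.support
        have hnd : W'.support.Nodup := by
          have := hW.support_nodup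
          simpa using this
        have hrevsup : W'.support.reverse = x :: R.support := by
          rw [← SimpleGraph.Walk.support_reverse, hR]; simp
        have : W'.support.reverse.Nodup := List.nodup_reverse.mpr hnd
        rw [hrevsup] at this
        exact (List.nodup_cons.mp this).1
      · intro e he
        have : e ∈ W'.reverse.edges := by rw [hR]; simp [he]
        rw [SimpleGraph.Walk.edges_reverse, List.mem_reverse] at this
        simp [this]

lemma two_edges_of_cycle [DecidableEq V] {Γ : SimpleGraph V} {r x : V} (K : Γ.Walk r r)
    (hK : K.IsCycle) (hx : x ∈ K.support) :
    ∃ y z, y ≠ z ∧ Γ.Adj x y ∧ Γ.Adj x z ∧ s(x,y) ∈ K.edges ∧ s(x,z) ∈ K.edges := by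
  obtain ⟨y, z, R, hyz, hady, hadz, hey, hez, -, -⟩ :=
    cycle_split (K.rotate x hx) (hK.rotate hx)
  have hrot : ∀ {e : Sym2 V}, e ∈ (K.rotate x hx).edges ↔ e ∈ K.edges :=
    fun {e} => (K.rotate_edges x hx).mem_iff
  exact ⟨y, z, hyz, hady, hadz, hrot.mp hey, hrot.mp hez⟩

lemma cycle_two_colors {k : ℕ} {Γ : SimpleGraph V} {r : V} {φ : Sym2 V → Fin k}
    (hp : ProperEC Γ φ) (K : Γ.Walk r r) (hK : K.IsCycle)
    (hcard : ¬ 2 < (K.edges.map φ).toFinset.card) :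
    ∃ β γ, β ≠ γ ∧ ∀ e ∈ K.edges, φ e = β ∨ φ e = γ := by
  have h3 := hK.three_le_length
  cases K with
  | nil => exact absurd rfl hK.isCircuit.ne_nil
  | @cons _ a _ h K₁ =>
    cases K₁ with
    | nil => simp at h3
    | @cons _ a₂ _ h₂ K₂ =>
      set e₁ : Sym2 V := s(r, a) with he₁
      set e₂ : Sym2 V := s(a, a₂) with he₂
      have hmem₁ : e₁ ∈ (SimpleGraph.Walk.cons h (SimpleGraph.Walk.cons h₂ K₂)).edges := by simp [he₁, he₂]
      have hmem₂ : e₂ ∈ (SimpleGraph.Walk.cons h (SimpleGraph.Walk.cons h₂ K₂)).edges := by simp [he₁, he₂]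
      have hne : e₁ ≠ e₂ := by
        have hnd := hK.isCircuit.isTrail.edges_nodup
        simp only [SimpleGraph.Walk.edges_cons, List.nodup_cons, List.mem_cons] at hnd
        intro hcontr
        exact hnd.1 (Or.inl hcontr)
      have hcol : φ e₁ ≠ φ e₂ := by
        refine hp e₁ (SimpleGraph.Walk.edges_subset_edgeSet _ hmem₁)
          e₂ (SimpleGraph.Walk.edges_subset_edgeSet _ hmem₂) hne ⟨a, by simp [he₁], by simp [he₂]⟩
      refine ⟨φ e₁, φ e₂, hcol, ?_⟩
      intro e he
      by_contra hcontr
      push_neg at hcontr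
      -- then toFinset has ≥ 3 elements
      apply hcard
      have m1 : φ e₁ ∈ ((SimpleGraph.Walk.cons h (SimpleGraph.Walk.cons h₂ K₂)).edges.map φ).toFinset := by
        simp only [List.mem_toFinset, List.mem_map]; exact ⟨e₁, hmem₁, rfl⟩
      have m2 : φ e₂ ∈ ((SimpleGraph.Walk.cons h (SimpleGraph.Walk.cons h₂ K₂)).edges.map φ).toFinset := by
        simp only [List.mem_toFinset, List.mem_map]; exact ⟨e₂, hmem₂, rfl⟩
      have m3 : φ e ∈ ((SimpleGraph.Walk.cons h (SimpleGraph.Walk.cons h₂ K₂)).edges.map φ).toFinset := by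
        simp only [List.mem_toFinset, List.mem_map]; exact ⟨e, he, rfl⟩
      have : ({φ e₁, φ e₂, φ e} : Finset (Fin k)) ⊆
          (List.map φ (SimpleGraph.Walk.cons h (SimpleGraph.Walk.cons h₂ K₂)).edges).toFinset := by
        intro t ht
        simp only [Finset.mem_insert, Finset.mem_singleton] at ht
        rcases ht with rfl | rfl | rfl
        · exact m1
        · exact m2
        · exact m3
      calc 2 < ({φ e₁, φ e₂, φ e} : Finset (Fin k)).card := by
              rw [Finset.card_insert_of_notMem (by simp [hcol, Ne.symm hcontr.1]),
                Finset.card_insert_of_notMem (by simp [Ne.symm hcontr.2]),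
                Finset.card_singleton]
              norm_num
        _ ≤ _ := Finset.card_le_card this

lemma interior_two_nbrs {B : SimpleGraph V} {s t : V} (p : B.Walk s t) (hp : p.IsPath)
    {x : V} (hx : x ∈ p.support) (hxs : x ≠ s) (hxt : x ≠ t) :
    ∃ y z, y ≠ z ∧ B.Adj x y ∧ B.Adj x z := by
  induction p with
  | nil => simp at hx; exact absurd hx hxs
  | @cons s a t h p₁ ih =>
    rw [SimpleGraph.Walk.support_cons, List.mem_cons] at hx
    rcases hx with rfl | hx
    · exact absurd rfl hxs
    by_cases hxa : x = a
    · subst hxa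
      cases p₁ with
      | nil => exact absurd rfl hxt
      | @cons _ n _ h₂ p₂ =>
        refine ⟨s, n, ?_, h.symm, h₂⟩
        intro hsn
        have : s ∈ (SimpleGraph.Walk.cons h₂ p₂).support := by
          rw [hsn]; simp
        have hnodup := hp.support_nodup
        rw [SimpleGraph.Walk.support_cons, List.nodup_cons] at hnodup
        exact hnodup.1 this
    · exact ih hp.of_cons hx hxa hxt

lemma path_determinism_aux {B : SimpleGraph V}
    (twoNbr : ∀ x a b c : V, B.Adj x a → B.Adj x b → B.Adj x c → a = b ∨ a = c ∨ b = c) :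
    ∀ (n : ℕ) {m x y : V} (p : B.Walk m x) (q : B.Walk m y), p.length ≤ n →
    p.IsPath → q.IsPath →
    (p.support.tail.head? = q.support.tail.head? ∨ p.Nil ∨ q.Nil) →
    x ∈ q.support ∨ y ∈ p.support := by
  intro n
  induction n with
  | zero =>
    intro m x y p q hlen hp hq hfirst
    cases p with
    | nil => exact Or.inl (SimpleGraph.Walk.start_mem_support q)
    | cons h p₁ => simp at hlen
  | succ n ih =>
    intro m x y p q hlen hp hq hfirst
    cases p with
    | nil => exact Or.inl (SimpleGraph.Walk.start_mem_support q)
    | @cons _ a _ h p₁ =>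
      cases q with
      | nil => exact Or.inr (SimpleGraph.Walk.start_mem_support (SimpleGraph.Walk.cons h p₁))
      | @cons _ a' _ h' q₁ =>
        have haa : a = a' := by
          rcases hfirst with hfirst | hnil | hnil
          · simp only [SimpleGraph.Walk.support_cons, List.tail_cons] at hfirst
            rw [SimpleGraph.Walk.support_eq_cons p₁, SimpleGraph.Walk.support_eq_cons q₁] at hfirst
            simp only [List.head?_cons, Option.some.injEq] at hfirst; exact hfirst
          · simp at hnil
          · simp at hnil
        subst haa
        cases p₁ with
        | nil =>
          left; rw [SimpleGraph.Walk.support_cons]; right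
          exact SimpleGraph.Walk.start_mem_support q₁
        | @cons _ n₁ _ h₁ p₂ =>
          cases q₁ with
          | nil =>
            right; rw [SimpleGraph.Walk.support_cons]; right
            exact SimpleGraph.Walk.start_mem_support (SimpleGraph.Walk.cons h₁ p₂)
          | @cons _ n₂ _ h₂ q₂ =>
            have hn₁ : n₁ ≠ m := by
              intro hcontr
              have hm : m ∈ (SimpleGraph.Walk.cons h₁ p₂).support := by
                rw [← hcontr]; simp
              have hnodup := hp.support_nodup
              rw [SimpleGraph.Walk.support_cons, List.nodup_cons] at hnodup
              exact hnodup.1 hm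
            have hn₂ : n₂ ≠ m := by
              intro hcontr
              have hm : m ∈ (SimpleGraph.Walk.cons h₂ q₂).support := by
                rw [← hcontr]; simp
              have hnodup := hq.support_nodup
              rw [SimpleGraph.Walk.support_cons, List.nodup_cons] at hnodup
              exact hnodup.1 hm
            have hnn : n₁ = n₂ := by
              rcases twoNbr a m n₁ n₂ h.symm h₁ h₂ with hc | hc | hc
              · exact absurd hc.symm hn₁
              · exact absurd hc.symm hn₂
              · exact hc
            have hrec := ih (SimpleGraph.Walk.cons h₁ p₂) (SimpleGraph.Walk.cons h₂ q₂)
              (by simp at hlen ⊢; omega)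
              hp.of_cons hq.of_cons (by
                left
                simp only [SimpleGraph.Walk.support_cons, List.tail_cons]
                rw [SimpleGraph.Walk.support_eq_cons p₂, SimpleGraph.Walk.support_eq_cons q₂]
                simp only [List.head?_cons, hnn])
            rcases hrec with hc | hc
            · left; rw [SimpleGraph.Walk.support_cons]; exact List.mem_cons_of_mem _ hc
            · right; rw [SimpleGraph.Walk.support_cons]; exact List.mem_cons_of_mem _ hc
/-- the 2-color subgraph -/
def csub {k : ℕ} (H : SimpleGraph V) (φ : Sym2 V → Fin k) (b c : Fin k) : SimpleGraph V where
  Adj x y := H.Adj x y ∧ (φ s(x,y) = b ∨ φ s(x,y) = c)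
  symm := by
    constructor
    intro x y ⟨h1, h2⟩
    refine ⟨h1.symm, ?_⟩
    rwa [Sym2.eq_swap (a := y)]
  loopless := ⟨fun x h => H.loopless.irrefl x h.1⟩

lemma edge_decomp {G : SimpleGraph V} {e : Sym2 V} (he : e ∈ G.edgeSet) {x : V} (hx : x ∈ e) :
    ∃ y, G.Adj x y ∧ e = s(x,y) := by
  induction e with
  | _ a b =>
    rcases Sym2.mem_iff.mp hx with rfl | rfl
    · exact ⟨b, he, rfl⟩
    · exact ⟨a, he.symm, Sym2.eq_swap⟩

lemma transfer_isCycle {Γ H : SimpleGraph V} {r : V} (W : Γ.Walk r r) (hW : W.IsCycle)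
    (h : ∀ e ∈ W.edges, e ∈ H.edgeSet) : (W.transfer H h).IsCycle := by
  refine ⟨⟨?_, ?_⟩, ?_⟩
  · rw [SimpleGraph.Walk.isTrail_def, SimpleGraph.Walk.edges_transfer]
    exact hW.isCircuit.isTrail.edges_nodup
  · intro hnil
    have := congrArg SimpleGraph.Walk.length hnil
    rw [SimpleGraph.Walk.length_transfer] at this
    have h3 := hW.three_le_length
    simp only [SimpleGraph.Walk.length_nil] at this
    omega
  · rw [SimpleGraph.Walk.support_transfer]
    exact hW.support_nodup
section Extension
variable [Fintype V] {G : SimpleGraph V} {k : ℕ} {v u w : V}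

lemma extension_lemma
    (hvu : G.Adj v u) (hvw : G.Adj v w) (huw : u ≠ w)
    (hnbr : ∀ y, G.Adj v y → y = u ∨ y = w)
    {H' : SimpleGraph V} (hH' : H' = G.deleteEdges {s(u,v), s(v,w)})
    [DecidableRel H'.Adj]
    {φ : Sym2 V → Fin k} (hφp : ProperEC H' φ)
    (hφa : ∀ (r : V) (W : H'.Walk r r), W.IsCycle → 2 < (W.edges.map φ).toFinset.card)
    {b c : Fin k} (hbc : b ≠ c) (hbw : b ∉ Cf H' φ w) (hcu : c ∉ Cf H' φ u)
    (hNR : ¬ (csub H' φ b c).Reachable u w) :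
    HasAEC G k := by
  classical
  set ψ : Sym2 V → Fin k := fun e => if e = s(u,v) then c else if e = s(v,w) then b else φ e
    with hψdef
  have hvu' : v ≠ u := hvu.ne
  have hvw' : v ≠ w := hvw.ne
  have hne_sp : s(u,v) ≠ s(v,w) := by
    intro hcontr
    rcases Sym2.eq_iff.mp hcontr with ⟨h1, h2⟩ | ⟨h1, h2⟩
    · exact hvu' h1.symm
    · exact huw h1
  have hψuv : ψ s(u,v) = c := by simp [hψdef]
  have hψvw : ψ s(v,w) = b := by simp [hψdef, Ne.symm hne_sp]
  have hψH : ∀ e, e ≠ s(u,v) → e ≠ s(v,w) → ψ e = φ e := by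
    intro e h1 h2; simp [hψdef, h1, h2]
  have hH'edge : ∀ {x y : V}, H'.Adj x y ↔ (G.Adj x y ∧ s(x,y) ≠ s(u,v) ∧ s(x,y) ≠ s(v,w)) := by
    subst hH'
    intro x y
    rw [SimpleGraph.deleteEdges_adj]
    simp only [Set.mem_insert_iff, Set.mem_singleton_iff]
    tauto
  -- K1: an edge sharing a vertex with s(u,v), other than the two special edges, avoids color c
  have K1 : ∀ e ∈ G.edgeSet, e ≠ s(u,v) → e ≠ s(v,w) → ∀ x, x ∈ e → x ∈ s(u,v) → ψ e ≠ c := by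
    intro e he h1 h2 x hxe hxuv
    rcases Sym2.mem_iff.mp hxuv with rfl | rfl
    · obtain ⟨y, hady, rfl⟩ := edge_decomp he hxe
      have hH'a : H'.Adj x y := hH'edge.mpr ⟨hady, h1, h2⟩
      have hmem : φ s(x,y) ∈ Cf H' φ x := mem_Cf.mpr ⟨y, hH'a, rfl⟩
      rw [hψH _ h1 h2]
      exact fun hc => hcu (hc ▸ hmem)
    · obtain ⟨y, hady, rfl⟩ := edge_decomp he hxe
      rcases hnbr y hady with rfl | rfl
      · exact absurd Sym2.eq_swap h1
      · exact absurd rfl h2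
  have K2 : ∀ e ∈ G.edgeSet, e ≠ s(u,v) → e ≠ s(v,w) → ∀ x, x ∈ e → x ∈ s(v,w) → ψ e ≠ b := by
    intro e he h1 h2 x hxe hxvw
    rcases Sym2.mem_iff.mp hxvw with rfl | rfl
    · obtain ⟨y, hady, rfl⟩ := edge_decomp he hxe
      rcases hnbr y hady with rfl | rfl
      · exact absurd Sym2.eq_swap h1
      · exact absurd rfl h2
    · obtain ⟨y, hady, rfl⟩ := edge_decomp he hxe
      have hH'a : H'.Adj x y := hH'edge.mpr ⟨hady, h1, h2⟩
      have hmem : φ s(x,y) ∈ Cf H' φ x := mem_Cf.mpr ⟨y, hH'a, rfl⟩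
      rw [hψH _ h1 h2]
      exact fun hc => hbw (hc ▸ hmem)
  have hproper : ProperEC G ψ := by
    have main1 : ∀ e₁ ∈ G.edgeSet, ∀ e₂ ∈ G.edgeSet, e₁ ≠ e₂ → (∃ x, x ∈ e₁ ∧ x ∈ e₂) →
        e₁ = s(u,v) → ψ e₁ ≠ ψ e₂ := by
      intro e₁ he₁ e₂ he₂ hne ⟨x, hx1, hx2⟩ h1
      subst h1
      by_cases h4 : e₂ = s(v,w)
      · subst h4; rw [hψuv, hψvw]; exact Ne.symm hbc
      · rw [hψuv]
        exact Ne.symm (K1 e₂ he₂ (fun h => hne h.symm) h4 x hx2 hx1)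
    have main2 : ∀ e₁ ∈ G.edgeSet, ∀ e₂ ∈ G.edgeSet, e₁ ≠ e₂ → (∃ x, x ∈ e₁ ∧ x ∈ e₂) →
        e₁ = s(v,w) → ψ e₁ ≠ ψ e₂ := by
      intro e₁ he₁ e₂ he₂ hne ⟨x, hx1, hx2⟩ h1
      subst h1
      by_cases h4 : e₂ = s(u,v)
      · subst h4; rw [hψuv, hψvw]; exact hbc
      · rw [hψvw]
        exact Ne.symm (K2 e₂ he₂ h4 (fun h => hne h.symm) x hx2 hx1)
    intro e₁ he₁ e₂ he₂ hne hshare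
    obtain ⟨x, hx1, hx2⟩ := hshare
    by_cases h1 : e₁ = s(u,v)
    · exact main1 e₁ he₁ e₂ he₂ hne ⟨x, hx1, hx2⟩ h1
    by_cases h2 : e₂ = s(u,v)
    · exact Ne.symm (main1 e₂ he₂ e₁ he₁ (Ne.symm hne) ⟨x, hx2, hx1⟩ h2)
    by_cases h3 : e₁ = s(v,w)
    · exact main2 e₁ he₁ e₂ he₂ hne ⟨x, hx1, hx2⟩ h3
    by_cases h4 : e₂ = s(v,w)
    · exact Ne.symm (main2 e₂ he₂ e₁ he₁ (Ne.symm hne) ⟨x, hx2, hx1⟩ h4)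
    · rw [hψH _ h1 h3, hψH _ h2 h4]
      have hm₁ : e₁ ∈ H'.edgeSet := by
        rw [hH', SimpleGraph.edgeSet_deleteEdges]
        exact ⟨he₁, by simp [h1, h3]⟩
      have hm₂ : e₂ ∈ H'.edgeSet := by
        rw [hH', SimpleGraph.edgeSet_deleteEdges]
        exact ⟨he₂, by simp [h2, h4]⟩
      exact hφp e₁ hm₁ e₂ hm₂ hne ⟨x, hx1, hx2⟩
  refine ⟨ψ, hproper, ?_⟩
  intro r W hW
  by_contra hcard
  obtain ⟨β, γ, hβγ, hcol⟩ := cycle_two_colors hproper W hW hcard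
  by_cases hv : v ∈ W.support
  · -- cycle through v: extract a u-w connection in the 2-color subgraph
    obtain ⟨y, p, R, hyp, hady, hadp, hey, hep, hvR, hRE⟩ :=
      cycle_split (W.rotate v hv) (hW.rotate hv)
    have rot : ∀ {e : Sym2 V}, e ∈ (W.rotate v hv).edges ↔ e ∈ W.edges :=
      fun {e} => (W.rotate_edges v hv).mem_iff
    have heyW : s(v,y) ∈ W.edges := rot.mp hey
    have hepW : s(v,p) ∈ W.edges := rot.mp hep
    -- colors b and c both appear on W
    have hψvy : ∀ z, G.Adj v z → ψ s(v,z) = b ∨ ψ s(v,z) = c := by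
      intro z hz
      rcases hnbr z hz with rfl | rfl
      · right; rw [Sym2.eq_swap]; exact hψuv
      · left; exact hψvw
    have hbmem : ∃ e ∈ W.edges, ψ e = b := by
      rcases hnbr y hady with rfl | rfl
      · rcases hnbr p hadp with rfl | rfl
        · exact absurd rfl hyp
        · exact ⟨s(v,p), hepW, hψvw⟩
      · exact ⟨s(v,y), heyW, hψvw⟩
    have hcmem : ∃ e ∈ W.edges, ψ e = c := by
      rcases hnbr y hady with rfl | rfl
      · exact ⟨s(v,y), heyW, by rw [Sym2.eq_swap]; exact hψuv⟩
      · rcases hnbr p hadp with rfl | rfl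
        · exact ⟨s(v,p), hepW, by rw [Sym2.eq_swap]; exact hψuv⟩
        · exact absurd rfl hyp
    -- hence {β,γ} = {b,c} : every W-edge has ψ-color b or c
    have hbc' : ∀ e ∈ W.edges, ψ e = b ∨ ψ e = c := by
      obtain ⟨eb, hebW, hebc⟩ := hbmem
      obtain ⟨ec, hecW, hecc⟩ := hcmem
      have hb' : b = β ∨ b = γ := by rw [← hebc]; exact hcol eb hebW
      have hc' : c = β ∨ c = γ := by rw [← hecc]; exact hcol ec hecW
      intro e he
      rcases hcol e he with h | h <;> rcases hb' with rfl | rfl <;> rcases hc' with rfl | rfl <;>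
        tauto
    -- transfer R to the 2-color subgraph
    have hBR : ∀ e ∈ R.edges, e ∈ (csub H' φ b c).edgeSet := by
      intro e he
      have heW : e ∈ W.edges := rot.mp (hRE e he)
      have heG : e ∈ G.edgeSet := W.edges_subset_edgeSet heW
      induction e with
      | _ a₁ a₂ =>
        have h₁ : a₁ ∈ R.support := R.fst_mem_support_of_mem_edges he
        have h₂ : a₂ ∈ R.support := R.snd_mem_support_of_mem_edges he
        have hv₁ : a₁ ≠ v := fun h => hvR (h ▸ h₁)
        have hv₂ : a₂ ≠ v := fun h => hvR (h ▸ h₂)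
        have hnsp1 : s(a₁,a₂) ≠ s(u,v) := by
          intro h
          have : v ∈ s(a₁,a₂) := by rw [h]; simp
          rcases Sym2.mem_iff.mp this with h' | h'
          · exact hv₁ h'.symm
          · exact hv₂ h'.symm
        have hnsp2 : s(a₁,a₂) ≠ s(v,w) := by
          intro h
          have : v ∈ s(a₁,a₂) := by rw [h]; simp
          rcases Sym2.mem_iff.mp this with h' | h'
          · exact hv₁ h'.symm
          · exact hv₂ h'.symm
        have hψφ : ψ s(a₁,a₂) = φ s(a₁,a₂) := hψH _ hnsp1 hnsp2
        have hcolmem : φ s(a₁,a₂) = b ∨ φ s(a₁,a₂) = c := by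
          have := hbc' _ heW; rwa [hψφ] at this
        have hadj : H'.Adj a₁ a₂ := hH'edge.mpr ⟨(G.mem_edgeSet).mp heG, hnsp1, hnsp2⟩
        exact (csub H' φ b c).mem_edgeSet.mpr ⟨hadj, hcolmem⟩
    have hreach : (csub H' φ b c).Reachable p y := ⟨R.transfer _ hBR⟩
    rcases hnbr y hady with rfl | rfl
    · rcases hnbr p hadp with rfl | rfl
      · exact absurd rfl hyp
      · exact hNR hreach.symm
    · rcases hnbr p hadp with rfl | rfl
      · exact hNR hreach
      · exact absurd rfl hyp
  · -- cycle avoiding v transfers to H' with the same colors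
    have hWe : ∀ e ∈ W.edges, e ∈ H'.edgeSet ∧ ψ e = φ e := by
      intro e he
      have heG : e ∈ G.edgeSet := W.edges_subset_edgeSet he
      induction e with
      | _ a₁ a₂ =>
        have h₁ : a₁ ∈ W.support := W.fst_mem_support_of_mem_edges he
        have h₂ : a₂ ∈ W.support := W.snd_mem_support_of_mem_edges he
        have hv₁ : a₁ ≠ v := fun h => hv (h ▸ h₁)
        have hv₂ : a₂ ≠ v := fun h => hv (h ▸ h₂)
        have hnsp1 : s(a₁,a₂) ≠ s(u,v) := by
          intro h
          have : v ∈ s(a₁,a₂) := by rw [h]; simp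
          rcases Sym2.mem_iff.mp this with h' | h'
          · exact hv₁ h'.symm
          · exact hv₂ h'.symm
        have hnsp2 : s(a₁,a₂) ≠ s(v,w) := by
          intro h
          have : v ∈ s(a₁,a₂) := by rw [h]; simp
          rcases Sym2.mem_iff.mp this with h' | h'
          · exact hv₁ h'.symm
          · exact hv₂ h'.symm
        refine ⟨H'.mem_edgeSet.mpr (hH'edge.mpr ⟨(G.mem_edgeSet).mp heG, hnsp1, hnsp2⟩), ?_⟩
        exact hψH _ hnsp1 hnsp2
    have hW' := transfer_isCycle W hW (fun e he => (hWe e he).1)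
    have h2' := hφa r (W.transfer H' (fun e he => (hWe e he).1)) hW'
    rw [SimpleGraph.Walk.edges_transfer] at h2'
    have hmapeq : W.edges.map φ = W.edges.map ψ :=
      List.map_congr_left (fun e he => ((hWe e he).2).symm)
    rw [hmapeq] at h2'
    have hsub : (W.edges.map ψ).toFinset ⊆ {β, γ} := by
      intro t ht
      rw [List.mem_toFinset, List.mem_map] at ht
      obtain ⟨e, he, rfl⟩ := ht
      rcases hcol e he with h | h <;> simp [h]
    have : ((W.edges.map ψ).toFinset).card ≤ 2 := by
      refine le_trans (Finset.card_le_card hsub) ?_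
      refine le_trans (Finset.card_insert_le _ _) ?_
      simp
    omega
end Extension
/-- In an acyclically edge `k`-critical graph with `k > Δ(G)`, every neighbor of a
vertex of degree 2 has degree at least `k - Δ(G) + 3`. -/
theorem critical_neighbors_of_twoVertex
    {V : Type u} [Fintype V] (G : SimpleGraph V) [DecidableRel G.Adj] (k : ℕ)
    (hG : AcyclicallyEdgeCritical G k) (hk : G.maxDegree < k)
    (v : V) (hv : G.degree v = 2) :
    ∀ u, G.Adj v u → k - G.maxDegree + 3 ≤ G.degree u := by
  classical
  intro u hvu
  by_contra hdeg
  push_neg at hdeg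
  -- the other neighbor w of v
  have huv_mem : u ∈ G.neighborFinset v := (G.mem_neighborFinset v u).mpr hvu
  have herase : ((G.neighborFinset v).erase u).card = 1 := by
    have := Finset.card_erase_add_one huv_mem
    rw [SimpleGraph.card_neighborFinset_eq_degree] at this
    omega
  obtain ⟨w, hw_single⟩ := Finset.card_eq_one.mp herase
  have hw_mem : w ∈ (G.neighborFinset v).erase u := by rw [hw_single]; simp
  have hwu : w ≠ u := (Finset.mem_erase.mp hw_mem).1
  have hvw : G.Adj v w := (G.mem_neighborFinset v w).mp (Finset.mem_erase.mp hw_mem).2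
  have hnbr : ∀ y, G.Adj v y → y = u ∨ y = w := by
    intro y hy
    by_cases hyu : y = u
    · exact Or.inl hyu
    · right
      have : y ∈ (G.neighborFinset v).erase u :=
        Finset.mem_erase.mpr ⟨hyu, (G.mem_neighborFinset v y).mpr hy⟩
      rw [hw_single] at this
      simpa using this
  have hvu' : v ≠ u := hvu.ne
  have hvw' : v ≠ w := hvw.ne
  -- the graph with both edges at v deleted
  set H' : SimpleGraph V := G.deleteEdges {s(u,v), s(v,w)} with hH'def
  haveI : DecidableRel H'.Adj := Classical.decRel _
  have hH'le : H' ≤ G := SimpleGraph.deleteEdges_le _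
  have hH'ne : H' ≠ G := by
    intro hEq
    have : H'.Adj u v := hEq ▸ hvu.symm
    rw [hH'def, SimpleGraph.deleteEdges_adj] at this
    exact this.2 (by simp)
  obtain ⟨φ, hφp, hφa⟩ := hG.2 H' hH'le hH'ne
  have hH'edge : ∀ {x y : V}, H'.Adj x y ↔ (G.Adj x y ∧ s(x,y) ≠ s(u,v) ∧ s(x,y) ≠ s(v,w)) := by
    intro x y
    rw [hH'def, SimpleGraph.deleteEdges_adj]
    simp only [Set.mem_insert_iff, Set.mem_singleton_iff]
    tauto
  set Δ := G.maxDegree with hΔdef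
  set Cu := Cf H' φ u with hCudef
  set Cw := Cf H' φ w with hCwdef
  -- degree bookkeeping
  have hdegle : ∀ x, H'.degree x ≤ G.degree x := by
    intro x
    apply Finset.card_le_card
    intro y hy
    rw [SimpleGraph.mem_neighborFinset] at hy ⊢
    exact hH'le hy
  have hnbrHu : H'.neighborFinset u = (G.neighborFinset u).erase v := by
    ext y
    rw [Finset.mem_erase, SimpleGraph.mem_neighborFinset, SimpleGraph.mem_neighborFinset, hH'edge]
    constructor
    · rintro ⟨hadj, h1, h2⟩
      exact ⟨fun hyv => h1 (by rw [hyv]), hadj⟩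
    · rintro ⟨hyv, hadj⟩
      refine ⟨hadj, fun hcontr => hyv (Sym2.congr_right.mp hcontr), ?_⟩
      intro hcontr
      rcases Sym2.eq_iff.mp hcontr with ⟨h1, h2⟩ | ⟨h1, h2⟩
      · exact hvu' h1.symm
      · exact hwu h1.symm
  have hnbrHw : H'.neighborFinset w = (G.neighborFinset w).erase v := by
    ext y
    rw [Finset.mem_erase, SimpleGraph.mem_neighborFinset, SimpleGraph.mem_neighborFinset, hH'edge]
    constructor
    · rintro ⟨hadj, h1, h2⟩
      refine ⟨fun hyv => h2 ?_, hadj⟩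
      rw [hyv, Sym2.eq_swap]
    · rintro ⟨hyv, hadj⟩
      refine ⟨hadj, ?_, ?_⟩
      · intro hcontr
        rcases Sym2.eq_iff.mp hcontr with ⟨h1, h2⟩ | ⟨h1, h2⟩
        · exact hwu h1
        · exact hvw' h1.symm
      · intro hcontr
        rw [Sym2.eq_swap] at hcontr
        exact hyv (Sym2.congr_left.mp hcontr)
  have hCu_card : Cu.card + 1 = G.degree u := by
    have h1 : Cu.card = H'.degree u := Cf_card hφp u
    have h2 : H'.degree u = ((G.neighborFinset u).erase v).card := by
      rw [SimpleGraph.degree, hnbrHu]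
    have h3 := Finset.card_erase_add_one ((G.mem_neighborFinset u v).mpr hvu.symm)
    rw [h1, h2, ← SimpleGraph.card_neighborFinset_eq_degree]
    exact h3
  have hCw_card : Cw.card + 1 = G.degree w := by
    have h1 : Cw.card = H'.degree w := Cf_card hφp w
    have h2 : H'.degree w = ((G.neighborFinset w).erase v).card := by
      rw [SimpleGraph.degree, hnbrHw]
    have h3 := Finset.card_erase_add_one ((G.mem_neighborFinset w v).mpr hvw.symm)
    rw [h1, h2, ← SimpleGraph.card_neighborFinset_eq_degree]
    exact h3
  have hdegu_le : G.degree u ≤ Δ := G.degree_le_maxDegree u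
  have hdegw_le : G.degree w ≤ Δ := G.degree_le_maxDegree w
  have hΔ2 : 2 ≤ Δ := hv ▸ G.degree_le_maxDegree v
  -- stuck hypothesis from criticality
  have hstuck : ∀ b c : Fin k, b ≠ c → b ∉ Cw → c ∉ Cu →
      (csub H' φ b c).Reachable u w := by
    intro b c h1 h2 h3
    by_contra hNR
    exact hG.1 (extension_lemma hvu hvw (Ne.symm hwu) hnbr hH'def hφp hφa h1 h2 h3 hNR)
  -- first step of a reachability walk
  have hfirst : ∀ {b c : Fin k}, (csub H' φ b c).Reachable u w →
      ∃ y, H'.Adj u y ∧ (φ s(u,y) = b ∨ φ s(u,y) = c) := by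
    intro b c hr
    obtain ⟨W⟩ := hr
    cases W with
    | nil => exact absurd rfl (Ne.symm hwu)
    | cons h W₁ => exact ⟨_, h.1, h.2⟩
  -- Step A: the two palettes cover everything
  have hunion : Cu ∪ Cw = Finset.univ := by
    by_contra hne
    obtain ⟨β, hβ⟩ : ∃ β, β ∉ Cu ∪ Cw := by
      by_contra h
      push_neg at h
      exact hne (Finset.eq_univ_iff_forall.mpr h)
    rw [Finset.mem_union] at hβ
    push_neg at hβ
    obtain ⟨c', hc'⟩ : ∃ c', c' ∉ insert β Cu := by
      by_contra h
      push_neg at h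
      have hsub : Finset.univ ⊆ insert β Cu := fun t _ => h t
      have hcard := Finset.card_le_card hsub
      rw [Finset.card_univ, Fintype.card_fin] at hcard
      have h1 := Finset.card_insert_le β Cu
      omega
    have hreach := hstuck β c' (fun h => hc' (h ▸ Finset.mem_insert_self β Cu)) hβ.2
      (fun h => hc' (Finset.mem_insert_of_mem h))
    obtain ⟨y, hy, hcol⟩ := hfirst hreach
    have hmem : φ s(u,y) ∈ Cu := mem_Cf.mpr ⟨y, hy, rfl⟩
    rcases hcol with h | h
    · exact hβ.1 (h ▸ hmem)
    · exact hc' (Finset.mem_insert_of_mem (h ▸ hmem))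
  have hksum : k ≤ Cu.card + Cw.card := by
    have h1 := Finset.card_union_le Cu Cw
    rw [hunion, Finset.card_univ, Fintype.card_fin] at h1
    omega
  have hCu_eq : Cu.card = k - Δ + 1 := by omega
  have hCw_eq : Cw.card = Δ - 1 := by omega
  have hdisj : ∀ t : Fin k, t ∈ Cu → t ∈ Cw → False := by
    have hint : (Cu ∩ Cw).card = 0 := by
      have := Finset.card_union_add_card_inter Cu Cw
      rw [hunion, Finset.card_univ, Fintype.card_fin] at this
      omega
    intro t h1 h2
    have : t ∈ Cu ∩ Cw := Finset.mem_inter.mpr ⟨h1, h2⟩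
    rw [Finset.card_eq_zero.mp hint] at this
    simp at this
    -- choose two colors at u and one at w
  obtain ⟨b, hb, b', hb', hbb'⟩ := Finset.one_lt_card.mp (show 1 < Cu.card by omega)
  obtain ⟨c, hc⟩ := Finset.card_pos.mp (show 0 < Cw.card by omega)
  obtain ⟨nb, hnb_adj, hnb_col⟩ := mem_Cf.mp hb
  obtain ⟨nb', hnb'_adj, hnb'_col⟩ := mem_Cf.mp hb'
  have hnb_ne : nb ≠ nb' := by
    intro h
    subst h
    exact hbb' (hnb_col ▸ hnb'_col ▸ rfl)
  have hcuw : ∀ y, H'.Adj u y → y ≠ w := by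
    intro y hy hyw
    subst hyw
    have h1 : φ s(u,y) ∈ Cu := mem_Cf.mpr ⟨y, hy, rfl⟩
    have h2 : φ s(u,y) ∈ Cw := mem_Cf.mpr ⟨u, hy.symm, by rw [Sym2.eq_swap]⟩
    exact hdisj _ h1 h2
  have hnbw : nb ≠ w := hcuw nb hnb_adj
  have hnb'w : nb' ≠ w := hcuw nb' hnb'_adj
  have hnbu : nb ≠ u := fun h => H'.loopless.irrefl u (h ▸ hnb_adj)
  have hnb'u : nb' ≠ u := fun h => H'.loopless.irrefl u (h ▸ hnb'_adj)
  -- Step D: palettes of the neighbors of u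
  have hpal : ∀ β ∈ Cu, ∀ nβ, H'.Adj u nβ → φ s(u,nβ) = β →
      Cf H' φ nβ = insert β Cw := by
    intro β hβ nβ hadj hcolβ
    have hβnw : β ∉ Cw := fun h => hdisj β hβ h
    have hsubset : insert β Cw ⊆ Cf H' φ nβ := by
      intro t ht
      rcases Finset.mem_insert.mp ht with rfl | htw
      · exact mem_Cf.mpr ⟨u, hadj.symm, by rw [Sym2.eq_swap]; exact hcolβ⟩
      · have hβt : β ≠ t := fun h => hdisj β hβ (h ▸ htw)
        have htCu : t ∉ Cu := fun h => hdisj t h htw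
        have hreach := hstuck β t hβt hβnw htCu
        obtain ⟨W₀⟩ := hreach
        have hPpath := W₀.toPath.prop
        cases hPval : W₀.toPath.val with
        | nil => exact absurd rfl (Ne.symm hwu)
        | @cons _ y₁ _ h₁ q =>
          rw [hPval] at hPpath
          have hy₁ : y₁ = nβ := by
            have hcol1 : φ s(u,y₁) = β ∨ φ s(u,y₁) = t := h₁.2
            have hcolCu : φ s(u,y₁) ∈ Cu := mem_Cf.mpr ⟨y₁, h₁.1, rfl⟩
            have hbeta : φ s(u,y₁) = β := by
              rcases hcol1 with h | h
              · exact h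
              · exact absurd (h ▸ hcolCu) htCu
            exact color_inj hφp h₁.1 hadj (hbeta.trans hcolβ.symm)
          subst hy₁
          cases q with
          | nil => exact absurd rfl (hcuw _ hadj)
          | @cons _ y₂ _ h₂ q₂ =>
            have hy₂u : y₂ ≠ u := by
              have hnodup := hPpath.support_nodup
              rw [SimpleGraph.Walk.support_cons, List.nodup_cons] at hnodup
              intro hcontr
              apply hnodup.1
              rw [SimpleGraph.Walk.support_cons, ← hcontr]
              right
              exact SimpleGraph.Walk.start_mem_support q₂
            have hcol2 : φ s(y₁,y₂) = β ∨ φ s(y₁,y₂) = t := h₂.2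
            rcases hcol2 with h | h
            · exfalso
              have huedge : φ s(y₁, u) = β := by rw [Sym2.eq_swap]; exact hcolβ
              exact hy₂u (color_inj hφp h₂.1 hadj.symm (h.trans huedge.symm))
            · exact mem_Cf.mpr ⟨y₂, h₂.1, h⟩
    have h1 : (insert β Cw).card = Δ := by
      rw [Finset.card_insert_of_notMem hβnw]
      omega
    have h2 : (Cf H' φ nβ).card ≤ Δ := by
      rw [Cf_card hφp]
      exact le_trans (hdegle nβ) (G.degree_le_maxDegree nβ)
    exact (Finset.eq_of_subset_of_card_le hsubset (by omega)).symm
    -- the swapped coloring φ'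
  set φ' : Sym2 V → Fin k :=
    fun e => if e = s(u,nb) then b' else if e = s(u,nb') then b else φ e with hφ'def
  have hswap_ne : s(u,nb') ≠ s(u,nb) := fun h => hnb_ne (Sym2.congr_right.mp h).symm
  have hval_unb : φ' s(u,nb) = b' := by simp [hφ'def]
  have hval_unb' : φ' s(u,nb') = b := by simp [hφ'def, hswap_ne]
  have hφ'gen : ∀ e, e ≠ s(u,nb) → e ≠ s(u,nb') → φ' e = φ e := by
    intro e h1 h2; simp [hφ'def, h1, h2]
  -- edge special tests
  have hU1 : ∀ {y : V}, y ≠ nb → s(u,y) ≠ s(u,nb) := by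
    intro y hy h
    rcases Sym2.eq_iff.mp h with ⟨_, h2⟩ | ⟨h1, _⟩
    · exact hy h2
    · exact hnbu h1.symm
  have hU2 : ∀ {y : V}, y ≠ nb' → s(u,y) ≠ s(u,nb') := by
    intro y hy h
    rcases Sym2.eq_iff.mp h with ⟨_, h2⟩ | ⟨h1, _⟩
    · exact hy h2
    · exact hnb'u h1.symm
  have hC : ∀ {y : V}, y ≠ u → s(nb,y) ≠ s(u,nb) := by
    intro y hy h
    rcases Sym2.eq_iff.mp h with ⟨h1, _⟩ | ⟨_, h2⟩
    · exact hnbu h1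
    · exact hy h2
  have hD : ∀ {y : V}, s(nb,y) ≠ s(u,nb') := by
    intro y h
    rcases Sym2.eq_iff.mp h with ⟨h1, _⟩ | ⟨h1, _⟩
    · exact hnbu h1
    · exact hnb_ne h1
  have hE : ∀ {y : V}, y ≠ u → s(nb',y) ≠ s(u,nb') := by
    intro y hy h
    rcases Sym2.eq_iff.mp h with ⟨h1, _⟩ | ⟨_, h2⟩
    · exact hnb'u h1
    · exact hy h2
  have hF : ∀ {y : V}, s(nb',y) ≠ s(u,nb) := by
    intro y h
    rcases Sym2.eq_iff.mp h with ⟨h1, _⟩ | ⟨h1, _⟩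
    · exact hnb'u h1
    · exact hnb_ne h1.symm
  have hgenA : ∀ {z y : V}, z ≠ u → z ≠ nb → z ≠ nb' → φ' s(z,y) = φ s(z,y) := by
    intro z y h1 h2 h3
    refine hφ'gen _ ?_ ?_
    · intro h
      rcases Sym2.eq_iff.mp h with ⟨ha, _⟩ | ⟨ha, _⟩
      · exact h1 ha
      · exact h2 ha
    · intro h
      rcases Sym2.eq_iff.mp h with ⟨ha, _⟩ | ⟨ha, _⟩
      · exact h1 ha
      · exact h3 ha
  -- φ-palette facts at nb, nb'
  have hpalb : Cf H' φ nb = insert b Cw := hpal b hb nb hnb_adj hnb_col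
  have hpalb' : Cf H' φ nb' = insert b' Cw := hpal b' hb' nb' hnb'_adj hnb'_col
  have hφnbu : φ s(nb,u) = b := by rw [Sym2.eq_swap]; exact hnb_col
  have hφnb'u : φ s(nb',u) = b' := by rw [Sym2.eq_swap]; exact hnb'_col
  have hnbCw : ∀ {y : V}, H'.Adj nb y → y ≠ u → φ s(nb,y) ∈ Cw := by
    intro y hy hyu
    have hmem : φ s(nb,y) ∈ Cf H' φ nb := mem_Cf.mpr ⟨y, hy, rfl⟩
    rw [hpalb] at hmem
    rcases Finset.mem_insert.mp hmem with h | h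
    · exact absurd (color_inj hφp hy hnb_adj.symm (h.trans hφnbu.symm)) hyu
    · exact h
  have hnb'Cw : ∀ {y : V}, H'.Adj nb' y → y ≠ u → φ s(nb',y) ∈ Cw := by
    intro y hy hyu
    have hmem : φ s(nb',y) ∈ Cf H' φ nb' := mem_Cf.mpr ⟨y, hy, rfl⟩
    rw [hpalb'] at hmem
    rcases Finset.mem_insert.mp hmem with h | h
    · exact absurd (color_inj hφp hy hnb'_adj.symm (h.trans hφnb'u.symm)) hyu
    · exact h
  -- F4 : palettes away from u, nb, nb' unchanged
  have F4 : ∀ x, x ≠ u → x ≠ nb → x ≠ nb' → Cf H' φ' x = Cf H' φ x := by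
    intro x h1 h2 h3
    apply Finset.image_congr
    intro y _
    exact hgenA h1 h2 h3
  -- F1 : palette at u unchanged as a set
  have F1 : Cf H' φ' u = Cu := by
    apply Finset.Subset.antisymm
    · intro t ht
      obtain ⟨y, hy, rfl⟩ := mem_Cf.mp ht
      by_cases h1 : y = nb
      · subst h1; rw [hval_unb]; exact hb'
      by_cases h2 : y = nb'
      · subst h2; rw [hval_unb']; exact hb
      · rw [hφ'gen _ (hU1 h1) (hU2 h2)]
        exact mem_Cf.mpr ⟨y, hy, rfl⟩
    · intro t ht
      by_cases h1 : t = b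
      · subst h1; exact mem_Cf.mpr ⟨nb', hnb'_adj, hval_unb'⟩
      by_cases h2 : t = b'
      · subst h2; exact mem_Cf.mpr ⟨nb, hnb_adj, hval_unb⟩
      · obtain ⟨y, hy, hcolt⟩ := mem_Cf.mp ht
        have hy1 : y ≠ nb := fun h => h1 (by rw [← hcolt, h]; exact hnb_col)
        have hy2 : y ≠ nb' := fun h => h2 (by rw [← hcolt, h]; exact hnb'_col)
        exact mem_Cf.mpr ⟨y, hy, by rw [hφ'gen _ (hU1 hy1) (hU2 hy2)]; exact hcolt⟩
  -- palette of nb under φ'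
  have F2b : Cf H' φ' nb = insert b' Cw := by
    apply Finset.Subset.antisymm
    · intro t ht
      obtain ⟨y, hy, rfl⟩ := mem_Cf.mp ht
      by_cases hyu : y = u
      · subst hyu
        rw [Sym2.eq_swap, hval_unb]
        exact Finset.mem_insert_self _ _
      · rw [hφ'gen _ (hC hyu) hD]
        exact Finset.mem_insert_of_mem (hnbCw hy hyu)
    · intro t ht
      rcases Finset.mem_insert.mp ht with rfl | htw
      · exact mem_Cf.mpr ⟨u, hnb_adj.symm, by rw [Sym2.eq_swap]; exact hval_unb⟩
      · have : t ∈ Cf H' φ nb := by rw [hpalb]; exact Finset.mem_insert_of_mem htw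
        obtain ⟨y, hy, hcolt⟩ := mem_Cf.mp this
        have hyu : y ≠ u := by
          intro h
          subst h
          rw [hφnbu] at hcolt
          exact hdisj b hb (hcolt ▸ htw)
        exact mem_Cf.mpr ⟨y, hy, by rw [hφ'gen _ (hC hyu) hD]; exact hcolt⟩
  have F2b' : Cf H' φ' nb' = insert b Cw := by
    apply Finset.Subset.antisymm
    · intro t ht
      obtain ⟨y, hy, rfl⟩ := mem_Cf.mp ht
      by_cases hyu : y = u
      · subst hyu
        rw [Sym2.eq_swap, hval_unb']
        exact Finset.mem_insert_self _ _
      · rw [hφ'gen _ hF (hE hyu)]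
        exact Finset.mem_insert_of_mem (hnb'Cw hy hyu)
    · intro t ht
      rcases Finset.mem_insert.mp ht with rfl | htw
      · exact mem_Cf.mpr ⟨u, hnb'_adj.symm, by rw [Sym2.eq_swap]; exact hval_unb'⟩
      · have : t ∈ Cf H' φ nb' := by rw [hpalb']; exact Finset.mem_insert_of_mem htw
        obtain ⟨y, hy, hcolt⟩ := mem_Cf.mp this
        have hyu : y ≠ u := by
          intro h
          subst h
          rw [hφnb'u] at hcolt
          exact hdisj b' hb' (hcolt ▸ htw)
        exact mem_Cf.mpr ⟨y, hy, by rw [hφ'gen _ hF (hE hyu)]; exact hcolt⟩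
    -- cardinalities of φ'-palettes, injectivity
  have hcardCf' : ∀ x, (Cf H' φ' x).card = H'.degree x := by
    intro x
    by_cases h1 : x = u
    · rw [h1, F1, hCudef, Cf_card hφp]
    by_cases h2 : x = nb
    · have e1 : (Cf H' φ nb).card = H'.degree nb := Cf_card hφp nb
      rw [hpalb] at e1
      rw [h2, F2b, ← e1, Finset.card_insert_of_notMem (fun h => hdisj b' hb' h),
        Finset.card_insert_of_notMem (fun h => hdisj b hb h)]
    by_cases h3 : x = nb'
    · have e1 : (Cf H' φ nb').card = H'.degree nb' := Cf_card hφp nb'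
      rw [hpalb'] at e1
      rw [h3, F2b', ← e1, Finset.card_insert_of_notMem (fun h => hdisj b hb h),
        Finset.card_insert_of_notMem (fun h => hdisj b' hb' h)]
    · rw [F4 x h1 h2 h3]; exact Cf_card hφp x
  have hinj' : ∀ {x y y' : V}, H'.Adj x y → H'.Adj x y' → φ' s(x,y) = φ' s(x,y') → y = y' := by
    intro x y y' hy hy' heq
    have hinj := Finset.injOn_of_card_image_eq
      (s := H'.neighborFinset x) (f := fun y => φ' s(x,y))
      (by rw [← Cf]; rw [hcardCf' x]; rfl)
    exact hinj ((H'.mem_neighborFinset x y).mpr hy) ((H'.mem_neighborFinset x y').mpr hy') heq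
  have hproper' : ProperEC H' φ' := by
    rintro e₁ he₁ e₂ he₂ hne ⟨x, hx1, hx2⟩
    obtain ⟨y₁, hady₁, rfl⟩ := edge_decomp he₁ hx1
    obtain ⟨y₂, hady₂, rfl⟩ := edge_decomp he₂ hx2
    intro heq
    exact hne (by rw [hinj' hady₁ hady₂ heq])
  -- F3 : general palette claim under φ'
  have F3 : ∀ β ∈ Cu, ∀ nβ, H'.Adj u nβ → φ' s(u,nβ) = β → Cf H' φ' nβ = insert β Cw := by
    intro β hβ nβ hadj hcolβ
    by_cases h1 : nβ = nb
    · have hβb' : β = b' := by rw [← hcolβ, h1, hval_unb]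
      rw [h1, hβb']
      exact F2b
    by_cases h2 : nβ = nb'
    · have hβb : β = b := by rw [← hcolβ, h2, hval_unb']
      rw [h2, hβb]
      exact F2b'
    · have hβφ : φ s(u,nβ) = β := by rw [← hφ'gen _ (hU1 h1) (hU2 h2)]; exact hcolβ
      rw [F4 nβ (fun h => H'.loopless.irrefl u (h ▸ hadj)) h1 h2]
      exact hpal β hβ nβ hadj hβφ
  -- acyclicity of φ'
  have hacyc' : ∀ r (W : H'.Walk r r), W.IsCycle → 2 < (W.edges.map φ').toFinset.card := by
    intro r W hW
    by_contra hcard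
    obtain ⟨β, γ, hβγ, hcol⟩ := cycle_two_colors hproper' W hW hcard
    by_cases hEW : s(u,nb) ∈ W.edges ∨ s(u,nb') ∈ W.edges
    · have hu : u ∈ W.support := by
        rcases hEW with h | h
        · exact W.fst_mem_support_of_mem_edges h
        · exact W.fst_mem_support_of_mem_edges h
      obtain ⟨y, z, hyz, hady, hadz, hey, hez⟩ := two_edges_of_cycle W hW hu
      have hcy := hcol _ hey
      have hcz := hcol _ hez
      have hneyz : φ' s(u,y) ≠ φ' s(u,z) := fun h => hyz (hinj' hady hadz h)
      have hyCu : φ' s(u,y) ∈ Cu := by rw [← F1]; exact mem_Cf.mpr ⟨y, hady, rfl⟩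
      have hzCu : φ' s(u,z) ∈ Cu := by rw [← F1]; exact mem_Cf.mpr ⟨z, hadz, rfl⟩
      have hcol2 : ∀ e ∈ W.edges, φ' e = φ' s(u,y) ∨ φ' e = φ' s(u,z) := by
        intro e he
        rcases hcy with h1 | h1 <;> rcases hcz with h2 | h2
        · exact absurd (h1.trans h2.symm) hneyz
        · rcases hcol e he with h | h
          · left; rw [h, ← h1]
          · right; rw [h, ← h2]
        · rcases hcol e he with h | h
          · right; rw [h, ← h2]
          · left; rw [h, ← h1]
        · exact absurd (h1.trans h2.symm) hneyz
      have hpy : Cf H' φ' y = insert (φ' s(u,y)) Cw := F3 _ hyCu y hady rfl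
      have hyW : y ∈ W.support := W.snd_mem_support_of_mem_edges hey
      obtain ⟨p, q, hpq, hadp, hadq, hep, heq⟩ := two_edges_of_cycle W hW hyW
      have hpcol := hcol2 _ hep
      have hqcol := hcol2 _ heq
      have hnepq : φ' s(y,p) ≠ φ' s(y,q) := fun h => hpq (hinj' hadp hadq h)
      have hzmem : φ' s(u,z) ∈ Cf H' φ' y := by
        rcases hpcol with h | h
        · rcases hqcol with h' | h'
          · exact absurd (h.trans h'.symm) hnepq
          · rw [← h']; exact mem_Cf.mpr ⟨q, hadq, rfl⟩
        · rw [← h]; exact mem_Cf.mpr ⟨p, hadp, rfl⟩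
      rw [hpy] at hzmem
      rcases Finset.mem_insert.mp hzmem with h | h
      · exact hneyz h.symm
      · exact hdisj _ hzCu h
    · push_neg at hEW
      have hmapeq : W.edges.map φ' = W.edges.map φ :=
        List.map_congr_left (fun e he => hφ'gen e (fun h => hEW.1 (h ▸ he)) (fun h => hEW.2 (h ▸ he)))
      rw [hmapeq] at hcard
      exact hcard (hφa r W hW)
    -- chosen colors are legitimate for the extension
  have hbc : b ≠ c := fun h => hdisj b hb (h ▸ hc)
  have hbw : b ∉ Cw := fun h => hdisj b hb h
  have hcu : c ∉ Cu := fun h => hdisj c h hc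
  have hreach1 : (csub H' φ b c).Reachable u w := hstuck b c hbc hbw hcu
  -- unique-neighbor facts in B = csub H' φ b c
  have twoNbr : ∀ x a₁ a₂ a₃ : V, (csub H' φ b c).Adj x a₁ → (csub H' φ b c).Adj x a₂ →
      (csub H' φ b c).Adj x a₃ → a₁ = a₂ ∨ a₁ = a₃ ∨ a₂ = a₃ := by
    intro x a₁ a₂ a₃ h1 h2 h3
    rcases h1.2 with hc1 | hc1 <;> rcases h2.2 with hc2 | hc2 <;> rcases h3.2 with hc3 | hc3
    · exact Or.inl (color_inj hφp h1.1 h2.1 (hc1.trans hc2.symm))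
    · exact Or.inl (color_inj hφp h1.1 h2.1 (hc1.trans hc2.symm))
    · exact Or.inr (Or.inl (color_inj hφp h1.1 h3.1 (hc1.trans hc3.symm)))
    · exact Or.inr (Or.inr (color_inj hφp h2.1 h3.1 (hc2.trans hc3.symm)))
    · exact Or.inr (Or.inr (color_inj hφp h2.1 h3.1 (hc2.trans hc3.symm)))
    · exact Or.inr (Or.inl (color_inj hφp h1.1 h3.1 (hc1.trans hc3.symm)))
    · exact Or.inl (color_inj hφp h1.1 h2.1 (hc1.trans hc2.symm))
    · exact Or.inl (color_inj hφp h1.1 h2.1 (hc1.trans hc2.symm))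
  have huniqU : ∀ {a a' : V}, (csub H' φ b c).Adj u a → (csub H' φ b c).Adj u a' → a = a' := by
    intro a a' h1 h2
    have e1 : φ s(u,a) = b := by
      rcases h1.2 with h | h
      · exact h
      · exact absurd (h ▸ mem_Cf.mpr ⟨a, h1.1, rfl⟩) hcu
    have e2 : φ s(u,a') = b := by
      rcases h2.2 with h | h
      · exact h
      · exact absurd (h ▸ mem_Cf.mpr ⟨a', h2.1, rfl⟩) hcu
    exact color_inj hφp h1.1 h2.1 (e1.trans e2.symm)
  have huniqW : ∀ {a a' : V}, (csub H' φ b c).Adj w a → (csub H' φ b c).Adj w a' → a = a' := by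
    intro a a' h1 h2
    have e1 : φ s(w,a) = c := by
      rcases h1.2 with h | h
      · exact absurd (h ▸ mem_Cf.mpr ⟨a, h1.1, rfl⟩) hbw
      · exact h
    have e2 : φ s(w,a') = c := by
      rcases h2.2 with h | h
      · exact absurd (h ▸ mem_Cf.mpr ⟨a', h2.1, rfl⟩) hbw
      · exact h
    exact color_inj hφp h1.1 h2.1 (e1.trans e2.symm)
  have huniqNb' : ∀ {a a' : V}, (csub H' φ b c).Adj nb' a → (csub H' φ b c).Adj nb' a' → a = a' := by
    intro a a' h1 h2
    have key : ∀ {z : V}, (csub H' φ b c).Adj nb' z → φ s(nb',z) = c := by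
      intro z hz
      rcases hz.2 with h | h
      · exfalso
        have : φ s(nb',z) ∈ Cf H' φ nb' := mem_Cf.mpr ⟨z, hz.1, rfl⟩
        rw [hpalb', h] at this
        rcases Finset.mem_insert.mp this with h' | h'
        · exact hbb' h'
        · exact hbw h'
      · exact h
    exact color_inj hφp h1.1 h2.1 ((key h1).trans (key h2).symm)
  -- no u-w connection in the (b,c)-subgraph of φ'
  have hNR' : ¬ (csub H' φ' b c).Reachable u w := by
    intro hr
    obtain ⟨W₀⟩ := hr
    have hPpath := W₀.toPath.prop
    cases hPval : W₀.toPath.val with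
    | nil => exact absurd rfl (Ne.symm hwu)
    | @cons _ y₁ _ h₁ q =>
      rw [hPval] at hPpath
      have hy₁ : y₁ = nb' := by
        have hCu1 : φ' s(u,y₁) ∈ Cu := by rw [← F1]; exact mem_Cf.mpr ⟨y₁, h₁.1, rfl⟩
        have hcolb : φ' s(u,y₁) = b := by
          rcases h₁.2 with h | h
          · exact h
          · exact absurd (h ▸ hCu1) hcu
        exact hinj' h₁.1 hnb'_adj (hcolb.trans hval_unb'.symm)
      have hu_not : u ∉ q.support := by
        have hnodup := hPpath.support_nodup
        rw [SimpleGraph.Walk.support_cons, List.nodup_cons] at hnodup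
        exact hnodup.1
      have hqB : ∀ e ∈ q.edges, e ∈ (csub H' φ b c).edgeSet := by
        intro e he
        have heB' : e ∈ (csub H' φ' b c).edgeSet := q.edges_subset_edgeSet he
        induction e with
        | _ a₁ a₂ =>
          have h₁s : a₁ ∈ q.support := q.fst_mem_support_of_mem_edges he
          have h₂s : a₂ ∈ q.support := q.snd_mem_support_of_mem_edges he
          have ha₁ : a₁ ≠ u := fun h => hu_not (h ▸ h₁s)
          have ha₂ : a₂ ≠ u := fun h => hu_not (h ▸ h₂s)
          have hne1 : s(a₁,a₂) ≠ s(u,nb) := by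
            intro h
            rcases Sym2.eq_iff.mp h with ⟨ha, _⟩ | ⟨_, hb2⟩
            · exact ha₁ ha
            · exact ha₂ hb2
          have hne2 : s(a₁,a₂) ≠ s(u,nb') := by
            intro h
            rcases Sym2.eq_iff.mp h with ⟨ha, _⟩ | ⟨_, hb2⟩
            · exact ha₁ ha
            · exact ha₂ hb2
          have hadj : (csub H' φ' b c).Adj a₁ a₂ := (csub H' φ' b c).mem_edgeSet.mp heB'
          exact (csub H' φ b c).mem_edgeSet.mpr
            ⟨hadj.1, by rw [← hφ'gen _ hne1 hne2]; exact hadj.2⟩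
      have hreach2 : (csub H' φ b c).Reachable nb' w := hy₁ ▸ ⟨q.transfer _ hqB⟩
      -- determinism / forest contradiction
      obtain ⟨W₁⟩ := hreach1.symm
      obtain ⟨W₂⟩ := hreach2.symm
      have hfa : W₁.toPath.val.support.tail.head? = W₂.toPath.val.support.tail.head? ∨
          W₁.toPath.val.Nil ∨ W₂.toPath.val.Nil := by
        cases h1 : W₁.toPath.val with
        | nil => exact absurd rfl (Ne.symm hwu)
        | @cons _ s₁ _ h₁' q₁ =>
          cases h2 : W₂.toPath.val with
          | nil => exact absurd rfl hnb'w
          | @cons _ s₂ _ h₂' q₂ =>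
            left
            simp only [SimpleGraph.Walk.support_cons, List.tail_cons]
            rw [SimpleGraph.Walk.support_eq_cons q₁, SimpleGraph.Walk.support_eq_cons q₂]
            simp only [List.head?_cons]
            exact congrArg some (huniqW h₁' h₂')
      have hdet := path_determinism_aux twoNbr W₁.toPath.val.length
        W₁.toPath.val W₂.toPath.val le_rfl W₁.toPath.prop W₂.toPath.prop hfa
      rcases hdet with hmem | hmem
      · obtain ⟨a₁, a₂, hne12, haa₁, haa₂⟩ :=
          interior_two_nbrs W₂.toPath.val W₂.toPath.prop hmem (Ne.symm hwu) (Ne.symm hnb'u)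
        exact hne12 (huniqU haa₁ haa₂)
      · obtain ⟨a₁, a₂, hne12, haa₁, haa₂⟩ :=
          interior_two_nbrs W₁.toPath.val W₁.toPath.prop hmem hnb'w hnb'u
        exact hne12 (huniqNb' haa₁ haa₂)
  -- final contradiction via the extension lemma applied to φ'
  have hbw' : b ∉ Cf H' φ' w := by
    rw [F4 w hwu (Ne.symm hnbw) (Ne.symm hnb'w)]
    exact hbw
  have hcu' : c ∉ Cf H' φ' u := by rw [F1]; exact hcu
  exact hG.1 (extension_lemma hvu hvw (Ne.symm hwu) hnbr hH'def hproper' hacyc' hbc hbw' hcu' hNR')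
end
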